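/- Let P be a closed convex cone in R^d, spanning and pointed, with interior Ω, and let a ∈ Ω. If (x_n) is a sequence in P converging to a, then there exists a subsequence (x_{n_k}) and positive reals (t_{n_k}) such that t_{n_k} → 1, z_{n_k} := x_{n_k} - t_{n_k} a ∈ P for all k, and (z_{n_k}) decreases to 0 (each difference z_{n_k} - z_{n_{k+1}} ∈ P and z_{n_k} → 0). -/
import Mathlib

theorem stmt6 {d : ℕ} (P : Set (EuclideanSpace ℝ (Fin d)))
    (hclosed : IsClosed P) (hconv : Convex ℝ P)
    (hcone : ∀ c : ℝ, 0 ≤ c → ∀ x ∈ P, c • x ∈ P)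
    (hspan : ∀ v : EuclideanSpace ℝ (Fin d), ∃ x ∈ P, ∃ y ∈ P, v = x - y)
    (hpointed : P ∩ (-P) = {0})
    (a : EuclideanSpace ℝ (Fin d)) (ha : a ∈ interior P)
    (x : ℕ → EuclideanSpace ℝ (Fin d)) (hx : ∀ n, x n ∈ P)
    (hlim : Filter.Tendsto x Filter.atTop (nhds a)) :
    ∃ (φ : ℕ → ℕ) (t : ℕ → ℝ), StrictMono φ ∧
      (∀ k, 0 < t k) ∧
      Filter.Tendsto t Filter.atTop (nhds 1) ∧
      (∀ k, x (φ k) - t k • a ∈ P) ∧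
      (∀ k, (x (φ k) - t k • a) - (x (φ (k + 1)) - t (k + 1) • a) ∈ P) ∧
      Filter.Tendsto (fun k => x (φ k) - t k • a) Filter.atTop (nhds 0) := by
  -- get a closed ball around a inside P
  obtain ⟨ε, εpos, hball⟩ : ∃ ε > 0, Metric.ball a ε ⊆ P := by
    obtain ⟨ε, εpos, hb⟩ := Metric.isOpen_iff.mp isOpen_interior a ha
    exact ⟨ε, εpos, hb.trans interior_subset⟩
  have hcb : Metric.closedBall a (ε/2) ⊆ P := by
    refine (Metric.closedBall_subset_ball ?_).trans hball
    linarith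
  set ε' := ε/2 with hε'
  have ε'pos : 0 < ε' := by positivity
  have key : ∀ (s : ℝ), 0 < s → ∀ v : EuclideanSpace ℝ (Fin d),
      ‖v‖ ≤ s * ε' → s • a + v ∈ P := by
    intro s hs v hv
    have h1 : a + s⁻¹ • v ∈ P := by
      apply hcb
      simp only [Metric.mem_closedBall, dist_eq_norm]
      have : a + s⁻¹ • v - a = s⁻¹ • v := by abel
      rw [this, norm_smul, Real.norm_eq_abs, abs_of_pos (inv_pos.mpr hs)]
      rw [inv_mul_le_iff₀ hs]
      linarith [hv]
    have h2 := hcone s hs.le _ h1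
    have : s • (a + s⁻¹ • v) = s • a + v := by
      rw [smul_add, smul_smul, mul_inv_cancel₀ hs.ne', one_smul]
    rwa [this] at h2
  set δ : ℕ → ℝ := fun k => (1/2 : ℝ) ^ (k + 1) with hδ
  have δpos : ∀ k, 0 < δ k := fun k => by positivity
  have δlt1 : ∀ k, δ k < 1 := fun k =>
    pow_lt_one₀ (by norm_num) (by norm_num) (Nat.succ_ne_zero k)
  -- extract subsequence
  have hev : ∀ k : ℕ, ∀ᶠ n in Filter.atTop, ‖x n - a‖ ≤ ε' * (1/2 : ℝ) ^ (k + 4) := by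
    intro k
    have hpos : (0:ℝ) < ε' * (1/2 : ℝ) ^ (k + 4) := by positivity
    have := (Metric.tendsto_atTop.mp hlim) _ hpos
    obtain ⟨N, hN⟩ := this
    refine Filter.eventually_atTop.mpr ⟨N, fun n hn => ?_⟩
    have := hN n hn
    rw [dist_eq_norm] at this
    linarith
  obtain ⟨φ, hφ, hφle⟩ := Filter.extraction_forall_of_eventually hev
  refine ⟨φ, fun k => 1 - δ k, hφ, ?_, ?_, ?_, ?_, ?_⟩
  · intro k; show (0:ℝ) < 1 - δ k; have := δlt1 k; linarith
  · have h0 : Filter.Tendsto δ Filter.atTop (nhds 0) := by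
      have := tendsto_pow_atTop_nhds_zero_of_lt_one (by norm_num : (0:ℝ) ≤ 1/2)
        (by norm_num : (1/2:ℝ) < 1)
      exact this.comp (Filter.tendsto_add_atTop_nat 1)
    have := Filter.Tendsto.sub (tendsto_const_nhds (x := (1:ℝ))) h0
    simpa using this
  · intro k
    have heq : x (φ k) - (1 - δ k) • a = δ k • a + (x (φ k) - a) := by
      rw [sub_smul, one_smul]; abel
    rw [heq]
    apply key _ (δpos k)
    calc ‖x (φ k) - a‖ ≤ ε' * (1/2:ℝ) ^ (k + 4) := hφle k
      _ ≤ δ k * ε' := by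
          rw [hδ]
          have : ((1:ℝ)/2) ^ (k + 4) ≤ (1/2) ^ (k + 1) :=
            pow_le_pow_of_le_one (by norm_num) (by norm_num) (by omega)
          nlinarith [ε'pos]
  · intro k
    have heq : (x (φ k) - (1 - δ k) • a) - (x (φ (k+1)) - (1 - δ (k+1)) • a)
        = (δ k - δ (k+1)) • a + (x (φ k) - x (φ (k+1))) := by
      simp only [sub_smul, one_smul]; abel
    rw [heq]
    have hd : δ k - δ (k+1) = (1/2:ℝ) ^ (k + 2) := by
      show (1/2:ℝ)^(k+1) - (1/2:ℝ)^(k+1+1) = (1/2:ℝ)^(k+2)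
      rw [pow_succ (1/2:ℝ) (k+1), pow_add]; ring
    apply key _ (by rw [hd]; positivity)
    have h1 := hφle k
    have h2 := hφle (k+1)
    have htri : ‖x (φ k) - x (φ (k+1))‖ ≤ ‖x (φ k) - a‖ + ‖x (φ (k+1)) - a‖ := by
      have := norm_sub_le (x (φ k) - a) (x (φ (k+1)) - a)
      simpa [sub_sub_sub_cancel_right] using this
    rw [hd]
    have hr : (0:ℝ) ≤ (1/2:ℝ) ^ k := by positivity
    have e1 : ((1:ℝ)/2) ^ (k + 4) = (1/2)^k * (1/16) := by rw [pow_add]; norm_num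
    have e2 : ((1:ℝ)/2) ^ (k + 1 + 4) = (1/2)^k * (1/32) := by
      rw [pow_add, pow_succ]; ring
    have e3 : ((1:ℝ)/2) ^ (k + 2) = (1/2)^k * (1/4) := by rw [pow_add]; norm_num
    rw [e1] at h1; rw [e2] at h2; rw [e3]
    nlinarith [ε'pos]
  · have hxφ : Filter.Tendsto (fun k => x (φ k)) Filter.atTop (nhds a) :=
      hlim.comp hφ.tendsto_atTop
    have hta : Filter.Tendsto (fun k => (1 - δ k) • a) Filter.atTop (nhds a) := by
      have h0 : Filter.Tendsto δ Filter.atTop (nhds 0) := by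
        have := tendsto_pow_atTop_nhds_zero_of_lt_one (by norm_num : (0:ℝ) ≤ 1/2)
          (by norm_num : (1/2:ℝ) < 1)
        exact this.comp (Filter.tendsto_add_atTop_nat 1)
      have : Filter.Tendsto (fun k => (1 - δ k)) Filter.atTop (nhds 1) := by
        have := Filter.Tendsto.sub (tendsto_const_nhds (x := (1:ℝ))) h0
        simpa using this
      have := this.smul (tendsto_const_nhds (x := a))
      simpa using this
    have := hxφ.sub hta
    simpa using this
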